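/- Let G be a star graph on {x_1,...,x_n} with n ≥ 5 (center x_1, edges {x_1,x_i} for i ≥ 2). Then for every k ≥ 2, I_c(G)^(k) ≠ I_c(G)^k. Specifically, for any edge e of G, the monomial (∏_{x_j ∉ e} x_j)^{k-2} · (x_2 x_3 ⋯ x_n) has degree (n-2)(k-2) + n - 1 < k(n-2), lies in I_c(G)^(k), but cannot lie in I_c(G)^k since every monomial in I_c(G)^k has degree at least k(n-2). -/

import Mathlib

open MvPolynomial

noncomputable def symbPow {R : Type*} [CommRing R] (I : Ideal R) (k : ℕ) : Ideal R :=
  ⨅ p ∈ I.minimalPrimes, p ^ k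

noncomputable def compIdeal {V : Type*} [Fintype V] [DecidableEq V]
    (K : Type*) [Field K] (G : SimpleGraph V) : Ideal (MvPolynomial V K) :=
  Ideal.span {m | ∃ i j, G.Adj i j ∧ m = ∏ l ∈ Finset.univ \ {i, j}, X l}

lemma prodX_eq_monomial {σ : Type*} [DecidableEq σ] (K : Type*) [Field K] (s : Finset σ) :
    (∏ l ∈ s, X l : MvPolynomial σ K) = monomial (∑ l ∈ s, Finsupp.single l 1) 1 := by
  classical
  induction s using Finset.induction with
  | empty => simp
  | insert _ _ h ih =>
    rw [Finset.prod_insert h, Finset.sum_insert h, ih]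
    rw [show (X _ : MvPolynomial σ K) = monomial (Finsupp.single _ 1) 1 from rfl,
      monomial_mul, one_mul]

lemma degsum_eq {σ : Type*} [DecidableEq σ] (s : Finset σ) :
    (∑ l ∈ s, Finsupp.single l (1 : ℕ)).sum (fun _ e => e) = s.card := by
  classical
  induction s using Finset.induction with
  | empty => simp
  | insert _ _ h ih =>
    rw [Finset.sum_insert h, Finsupp.sum_add_index (by simp) (by simp), ih,
      Finsupp.sum_single_index rfl, Finset.card_insert_of_notMem h]
    omega

lemma smul_degsum {σ : Type*} (c : ℕ) (D : σ →₀ ℕ) :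
    (c • D).sum (fun _ e => e) = c * D.sum (fun _ e => e) := by
  rw [Finsupp.sum_smul_index (fun _ => rfl)]
  rw [Finsupp.mul_sum]

theorem stmt12 {n : ℕ} (hn : 5 ≤ n) (K : Type*) [Field K]
    (z : Fin n) (hz : (z : ℕ) = 0)
    (G : SimpleGraph (Fin n))
    (hG : ∀ i j, G.Adj i j ↔ i ≠ j ∧ (i = z ∨ j = z))
    (k : ℕ) (hk : 2 ≤ k) :
    (∀ a b : Fin n, G.Adj a b →
      ((∏ l ∈ Finset.univ \ {a, b}, (X l : MvPolynomial (Fin n) K)) ^ (k - 2) *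
          ∏ i ∈ Finset.univ.erase z, X i).totalDegree = (n - 2) * (k - 2) + n - 1 ∧
      (n - 2) * (k - 2) + n - 1 < k * (n - 2) ∧
      ((∏ l ∈ Finset.univ \ {a, b}, (X l : MvPolynomial (Fin n) K)) ^ (k - 2) *
          ∏ i ∈ Finset.univ.erase z, X i) ∈ symbPow (compIdeal K G) k ∧
      ((∏ l ∈ Finset.univ \ {a, b}, (X l : MvPolynomial (Fin n) K)) ^ (k - 2) *
          ∏ i ∈ Finset.univ.erase z, X i) ∉ compIdeal K G ^ k) ∧
    symbPow (compIdeal K G) k ≠ compIdeal K G ^ k := by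
  -- the arithmetic inequality
  have harith : (n - 2) * (k - 2) + n - 1 < k * (n - 2) := by
    obtain ⟨n', rfl⟩ : ∃ n', n = n' + 5 := ⟨n - 5, by omega⟩
    obtain ⟨k', rfl⟩ : ∃ k', k = k' + 2 := ⟨k - 2, by omega⟩
    have h1 : n' + 5 - 2 = n' + 3 := by omega
    have h2 : k' + 2 - 2 = k' := by omega
    rw [h1, h2]
    have : (k' + 2) * (n' + 3) = (n' + 3) * k' + (2 * n' + 6) := by ring
    omega
  have hmain : ∀ a b : Fin n, G.Adj a b →
      ((∏ l ∈ Finset.univ \ {a, b}, (X l : MvPolynomial (Fin n) K)) ^ (k - 2) *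
          ∏ i ∈ Finset.univ.erase z, X i).totalDegree = (n - 2) * (k - 2) + n - 1 ∧
      (n - 2) * (k - 2) + n - 1 < k * (n - 2) ∧
      ((∏ l ∈ Finset.univ \ {a, b}, (X l : MvPolynomial (Fin n) K)) ^ (k - 2) *
          ∏ i ∈ Finset.univ.erase z, X i) ∈ symbPow (compIdeal K G) k ∧
      ((∏ l ∈ Finset.univ \ {a, b}, (X l : MvPolynomial (Fin n) K)) ^ (k - 2) *
          ∏ i ∈ Finset.univ.erase z, X i) ∉ compIdeal K G ^ k := by
    intro a b hab
    obtain ⟨hne, hzab⟩ := (hG a b).1 hab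
    have hcard1 : (Finset.univ \ {a, b} : Finset (Fin n)).card = n - 2 := by
      rw [Finset.card_sdiff_of_subset (Finset.subset_univ _), Finset.card_univ, Fintype.card_fin,
        Finset.card_pair hne]
    have hcard2 : (Finset.univ.erase z : Finset (Fin n)).card = n - 1 := by
      rw [Finset.card_erase_of_mem (Finset.mem_univ z), Finset.card_univ, Fintype.card_fin]
    -- total degree
    have hdeg :
        ((∏ l ∈ Finset.univ \ {a, b}, (X l : MvPolynomial (Fin n) K)) ^ (k - 2) *
          ∏ i ∈ Finset.univ.erase z, X i).totalDegree = (n - 2) * (k - 2) + n - 1 := by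
      rw [prodX_eq_monomial, prodX_eq_monomial, monomial_pow, monomial_mul, one_pow, one_mul,
        totalDegree_monomial _ (one_ne_zero : (1 : K) ≠ 0),
        Finsupp.sum_add_index (by simp) (by intros; rfl), smul_degsum, degsum_eq, degsum_eq,
        hcard1, hcard2, Nat.mul_comm]
      omega
    refine ⟨hdeg, harith, ?_, ?_⟩
    · -- membership in symbolic power
      simp only [symbPow, Ideal.mem_iInf]
      intro p hp
      obtain ⟨⟨hprime, hle⟩, -⟩ := hp
      -- find two distinct non-center variables in p
      have hfind : ∀ i : Fin n, i ≠ z → ∃ r : Fin n, r ≠ z ∧ r ≠ i ∧ X r ∈ p := by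
        intro i hi
        have hadj : G.Adj z i := (hG z i).2 ⟨Ne.symm hi, Or.inl rfl⟩
        have hgen : (∏ l ∈ Finset.univ \ {z, i}, (X l : MvPolynomial (Fin n) K)) ∈ p :=
          hle (Ideal.subset_span ⟨z, i, hadj, rfl⟩)
        haveI := hprime
        obtain ⟨r, hrmem, hrp⟩ := (Ideal.IsPrime.prod_mem_iff).1 hgen
        simp only [Finset.mem_sdiff, Finset.mem_univ, Finset.mem_insert, Finset.mem_singleton,
          true_and] at hrmem
        push_neg at hrmem
        exact ⟨r, hrmem.1, hrmem.2, hrp⟩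
      have hi0 : ∃ i0 : Fin n, i0 ≠ z := by
        refine ⟨⟨1, by omega⟩, ?_⟩
        intro h
        have := congrArg (Fin.val) h
        simp [hz] at this
      obtain ⟨i0, hi0z⟩ := hi0
      obtain ⟨r, hrz, -, hrp⟩ := hfind i0 hi0z
      obtain ⟨s, hsz, hsr, hsp⟩ := hfind r hrz
      -- the second factor is in p^2
      have hrm : r ∈ Finset.univ.erase z := Finset.mem_erase.2 ⟨hrz, Finset.mem_univ r⟩
      have hsm : s ∈ (Finset.univ.erase z).erase r :=
        Finset.mem_erase.2 ⟨hsr, Finset.mem_erase.2 ⟨hsz, Finset.mem_univ s⟩⟩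
      have hfac : (∏ i ∈ Finset.univ.erase z, (X i : MvPolynomial (Fin n) K)) =
          (X r * X s) * ∏ i ∈ ((Finset.univ.erase z).erase r).erase s, X i := by
        rw [mul_assoc, Finset.mul_prod_erase _ _ hsm, Finset.mul_prod_erase _ _ hrm]
      have h2 : (∏ i ∈ Finset.univ.erase z, (X i : MvPolynomial (Fin n) K)) ∈ p ^ 2 := by
        rw [hfac, pow_two]
        exact Ideal.mul_mem_right _ _ (Ideal.mul_mem_mul hrp hsp)
      -- first factor is in p^(k-2)
      have hg : (∏ l ∈ Finset.univ \ {a, b}, (X l : MvPolynomial (Fin n) K)) ∈ p :=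
        hle (Ideal.subset_span ⟨a, b, hab, rfl⟩)
      have := Ideal.mul_mem_mul (Ideal.pow_mem_pow hg (k - 2)) h2
      rwa [← pow_add, show k - 2 + 2 = k by omega] at this
    · -- not in ordinary power
      intro hmem
      set ψ : MvPolynomial (Fin n) K →ₐ[K] Polynomial K :=
        aeval (fun _ : Fin n => (Polynomial.X : Polynomial K)) with hψ
      have hψprod : ∀ s : Finset (Fin n),
          ψ (∏ l ∈ s, X l) = Polynomial.X ^ s.card := by
        intro s
        rw [map_prod]
        simp [hψ, Finset.prod_const]
      have hmap : Ideal.map ψ (compIdeal K G) ≤ Ideal.span {(Polynomial.X : Polynomial K) ^ (n - 2)} := by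
        rw [compIdeal, Ideal.map_span, Ideal.span_le]
        rintro x ⟨y, ⟨i, j, hij, rfl⟩, rfl⟩
        have hijne : i ≠ j := ((hG i j).1 hij).1
        have : (Finset.univ \ {i, j} : Finset (Fin n)).card = n - 2 := by
          rw [Finset.card_sdiff_of_subset (Finset.subset_univ _), Finset.card_univ, Fintype.card_fin,
            Finset.card_pair hijne]
        rw [hψprod, this]
        exact Ideal.subset_span rfl
      have h1 : ψ ((∏ l ∈ Finset.univ \ {a, b}, (X l : MvPolynomial (Fin n) K)) ^ (k - 2) *
          ∏ i ∈ Finset.univ.erase z, X i) ∈ Ideal.span {(Polynomial.X : Polynomial K) ^ ((n - 2) * k)} := by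
        have := Ideal.mem_map_of_mem ψ hmem
        rw [Ideal.map_pow] at this
        have h2 := (Ideal.pow_right_mono hmap k) this
        rwa [Ideal.span_singleton_pow, ← pow_mul] at h2
      rw [map_mul, map_pow, hψprod, hψprod, hcard1, hcard2, ← pow_mul, ← pow_add] at h1
      rw [Ideal.mem_span_singleton] at h1
      have hle' : (n - 2) * k ≤ (n - 2) * (k - 2) + (n - 1) := by
        by_contra hlt
        push_neg at hlt
        have := Polynomial.X_pow_dvd_iff.1 h1 ((n - 2) * (k - 2) + (n - 1)) hlt
        rw [Polynomial.coeff_X_pow] at this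
        simp at this
      have : (n - 2) * k = k * (n - 2) := by ring
      omega
  refine ⟨hmain, ?_⟩
  have hi0 : ∃ i0 : Fin n, i0 ≠ z := by
    refine ⟨⟨1, by omega⟩, ?_⟩
    intro h
    have := congrArg (Fin.val) h
    simp [hz] at this
  obtain ⟨i0, hi0z⟩ := hi0
  have hadj : G.Adj z i0 := (hG z i0).2 ⟨Ne.symm hi0z, Or.inl rfl⟩
  obtain ⟨-, -, hsym, hpow⟩ := hmain z i0 hadj
  intro heq
  exact hpow (heq ▸ hsym)
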